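/- Let n, r > 1 be integers and N = (r-1)n + 1. If A_1, ..., A_N are nonempty subsets of an n-element set, then there exist nonempty pairwise disjoint subsets J_1, ..., J_r of {1,...,N} such that the union of A_i over i in J_1 equals the union of A_i over i in J_2, and so on, all r unions being equal. -/

import Mathlib

open Finset Metric

local notation "⟪" x ", " y "⟫" => @inner ℝ _ _ x y

lemma mem_convexHull_range_iff' {E : Type*} [AddCommGroup E] [Module ℝ E] {N : ℕ}
    (f : Fin N → E) (x : E) :
    x ∈ convexHull ℝ (Set.range f) ↔
      ∃ c : Fin N → ℝ, (∀ i, 0 ≤ c i) ∧ ∑ i, c i = 1 ∧ ∑ i, c i • f i = x := by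
  classical
  constructor
  · intro hx
    have hsub : convexHull ℝ (Set.range f) ⊆
        {x | ∃ c : Fin N → ℝ, (∀ i, 0 ≤ c i) ∧ ∑ i, c i = 1 ∧ ∑ i, c i • f i = x} := by
      apply convexHull_min
      · rintro _ ⟨i, rfl⟩
        refine ⟨fun k => if k = i then 1 else 0, fun k => by positivity, by simp, by simp⟩
      · rintro y ⟨cy, hcy0, hcy1, hcys⟩ z ⟨cz, hcz0, hcz1, hczs⟩ a b ha hb hab
        refine ⟨fun i => a * cy i + b * cz i,
          fun i => by have := hcy0 i; have := hcz0 i; positivity, ?_, ?_⟩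
        · simp only [Finset.sum_add_distrib, ← Finset.mul_sum, hcy1, hcz1, mul_one, hab]
        · simp only [add_smul, mul_smul, Finset.sum_add_distrib, ← Finset.smul_sum,
            hcys, hczs]
    exact hsub hx
  · rintro ⟨c, hc0, hc1, rfl⟩
    have := Finset.centerMass_mem_convexHull (Finset.univ : Finset (Fin N))
      (fun i _ => hc0 i) (by rw [hc1]; norm_num)
      (fun i _ => (Set.mem_range_self i : f i ∈ Set.range f))
    rwa [Finset.centerMass, hc1, inv_one, one_smul] at this

lemma colorful_caratheodory {E : Type*} [NormedAddCommGroup E] [InnerProductSpace ℝ E]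
    [FiniteDimensional ℝ E] {N : ℕ} (hN : Module.finrank ℝ E < N)
    (C : Fin N → Finset E) (hC : ∀ i, (0 : E) ∈ convexHull ℝ (C i : Set E)) :
    ∃ f : Fin N → E, (∀ i, f i ∈ C i) ∧ (0 : E) ∈ convexHull ℝ (Set.range f) := by
  classical
  have hNpos : 0 < N := by omega
  have hne : ∀ i, (C i).Nonempty := by
    intro i
    rcases (C i).eq_empty_or_nonempty with h | h
    · exact absurd (hC i) (by simp [h])
    · exact h
  haveI : ∀ i : Fin N, Nonempty {x : E // x ∈ C i} :=
    fun i => ⟨⟨(hne i).choose, (hne i).choose_spec⟩⟩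
  haveI : Nonempty (∀ i : Fin N, {x : E // x ∈ C i}) := ⟨fun i => Classical.arbitrary _⟩
  let d : (∀ i : Fin N, {x : E // x ∈ C i}) → ℝ :=
    fun g => infDist 0 (convexHull ℝ (Set.range fun i => (g i : E)))
  obtain ⟨g, -, hgmin⟩ := Finset.exists_min_image (univ : Finset (∀ i : Fin N, {x : E // x ∈ C i})) d univ_nonempty
  set f : Fin N → E := fun i => (g i : E) with hf
  set K := convexHull ℝ (Set.range f) with hK
  have hKcompact : IsCompact K := (Set.finite_range f).isCompact_convexHull ℝ
  have hKconv : Convex ℝ K := convex_convexHull ℝ _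
  have hKne : K.Nonempty := ⟨f ⟨0, hNpos⟩, subset_convexHull ℝ _ (Set.mem_range_self _)⟩
  obtain ⟨y, hyK, hyd⟩ := hKcompact.exists_infDist_eq_dist hKne 0
  refine ⟨f, fun i => (g i).2, ?_⟩
  rcases eq_or_ne y 0 with rfl | hy0
  · exact hyK
  exfalso
  -- variational inequality
  have hiInf : ‖(0:E) - y‖ = ⨅ w : K, ‖(0:E) - w‖ := by
    rw [← dist_eq_norm, ← hyd, Metric.infDist_eq_iInf]
    congr 1; funext w; rw [dist_eq_norm]
  have hvar : ∀ w ∈ K, ⟪y, y⟫ ≤ ⟪y, w⟫ := by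
    intro w hw
    have h := (norm_eq_iInf_iff_real_inner_le_zero hKconv hyK).1 hiInf w hw
    rw [zero_sub, inner_neg_left, inner_sub_right] at h
    linarith
  have hyy : (0:ℝ) < ⟪y, y⟫ := by
    rw [real_inner_self_eq_norm_sq]; exact pow_pos (norm_pos_iff.2 hy0) 2
  -- representation of y with some zero coefficient
  obtain ⟨c, hc0, hc1, hcs⟩ := (mem_convexHull_range_iff' f y).1 hyK
  have hrep0 : ∃ c : Fin N → ℝ, (∀ i, 0 ≤ c i) ∧ ∑ i, c i = 1 ∧ (∑ i, c i • f i = y) ∧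
      ∃ i₀, c i₀ = 0 := by
    by_cases hzz : ∃ i₀, c i₀ = 0
    · exact ⟨c, hc0, hc1, hcs, hzz⟩
    push_neg at hzz
    have hcpos : ∀ i, 0 < c i := fun i => (hc0 i).lt_of_ne (Ne.symm (hzz i))
    have hplane : ∀ i, ⟪y, f i⟫ = ⟪y, y⟫ := by
      have hsum : ∑ i, c i * (⟪y, f i⟫ - ⟪y, y⟫) = 0 := by
        have h1 : ⟪y, ∑ i, c i • f i⟫ = ⟪y, y⟫ := by rw [hcs]
        rw [inner_sum] at h1
        simp only [real_inner_smul_right] at h1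
        simp [mul_sub, Finset.sum_sub_distrib, h1, ← Finset.sum_mul, hc1]
      intro i
      have hterm := (Finset.sum_eq_zero_iff_of_nonneg (fun i _ =>
        mul_nonneg (hc0 i) (sub_nonneg.2 (hvar (f i)
          (subset_convexHull ℝ _ (Set.mem_range_self i)))))).1 hsum i (mem_univ i)
      rcases mul_eq_zero.1 hterm with h2 | h2
      · exact absurd h2 (hzz i)
      · have := sub_eq_zero.1 h2; linarith
    have hdep : ¬ LinearIndependent ℝ f := by
      intro h
      have := h.fintype_card_le_finrank
      simp only [Fintype.card_fin] at this
      omega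
    obtain ⟨w, hw0, i₁, hwi₁⟩ := Fintype.not_linearIndependent_iff.1 hdep
    have hwsum : ∑ i, w i = 0 := by
      have h1 : ⟪y, ∑ i, w i • f i⟫ = 0 := by rw [hw0, inner_zero_right]
      rw [inner_sum] at h1
      simp only [real_inner_smul_right, hplane] at h1
      rw [← Finset.sum_mul] at h1
      rcases mul_eq_zero.1 h1 with h | h
      · exact h
      · exact absurd h (ne_of_gt hyy)
    have hneg : ∃ i, w i < 0 := by
      by_contra h
      push_neg at h
      exact hwi₁ ((Finset.sum_eq_zero_iff_of_nonneg (fun i _ => h i)).1 hwsum i₁ (mem_univ i₁))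
    obtain ⟨i₂, hi₂mem, hi₂min⟩ := Finset.exists_min_image (univ.filter fun i => w i < 0)
      (fun i => c i / (-w i)) (by obtain ⟨i, hi⟩ := hneg; exact ⟨i, by simp [hi]⟩)
    rw [mem_filter] at hi₂mem
    have hwi₂ : w i₂ < 0 := hi₂mem.2
    set t := c i₂ / (-w i₂) with ht
    have htpos : 0 < t := div_pos (hcpos i₂) (by linarith)
    have hwne : w i₂ ≠ 0 := ne_of_lt hwi₂
    refine ⟨fun i => c i + t * w i, ?_, ?_, ?_, ⟨i₂, ?_⟩⟩
    · intro i
      show 0 ≤ c i + t * w i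
      rcases lt_or_ge (w i) 0 with h | h
      · have hle : t ≤ c i / (-w i) := hi₂min i (by simp [h])
        have h2 : t * (-w i) ≤ c i := (le_div_iff₀ (by linarith)).1 hle
        linarith
      · have := hc0 i; nlinarith
    pick_goal 3
    · show c i₂ + t * w i₂ = 0
      rw [ht, div_mul_eq_mul_div, div_neg, mul_div_assoc, div_self hwne]; ring
    · rw [Finset.sum_add_distrib, hc1, ← Finset.mul_sum, hwsum, mul_zero, add_zero]
    · simp only [add_smul, mul_smul, Finset.sum_add_distrib, ← Finset.smul_sum, hcs, hw0,
        smul_zero, add_zero]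
  clear hc0 hc1 hcs
  obtain ⟨c, hc0, hc1, hcs, i₀, hci₀⟩ := hrep0
  -- find s ∈ C i₀ with ⟪y, s⟫ ≤ 0
  obtain ⟨s, hsmem, hsy⟩ : ∃ s ∈ C i₀, ⟪y, s⟫ ≤ 0 := by
    by_contra h
    push_neg at h
    have hhalf : Convex ℝ {x : E | 0 < ⟪y, x⟫} :=
      convex_halfSpace_gt ⟨fun a b => inner_add_right _ _ _,
        fun a b => real_inner_smul_right _ _ _⟩ 0
    have hsub : (C i₀ : Set E) ⊆ {x : E | 0 < ⟪y, x⟫} := fun x hx => h x hx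
    have h0 := convexHull_min hsub hhalf (hC i₀)
    simp at h0
  -- new selection
  set g' := Function.update g i₀ ⟨s, hsmem⟩ with hg'
  set f' : Fin N → E := fun i => (g' i : E) with hf'
  have hf'eq : ∀ i, i ≠ i₀ → f' i = f i := by
    intro i hi; simp [hf', hg', Function.update_of_ne hi, hf]
  have hf'i₀ : f' i₀ = s := by simp [hf', hg']
  set K' := convexHull ℝ (Set.range f') with hK'
  have hyK' : y ∈ K' := by
    rw [hK', mem_convexHull_range_iff']
    refine ⟨c, hc0, hc1, ?_⟩
    rw [← hcs]
    apply Finset.sum_congr rfl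
    intro i _
    rcases eq_or_ne i i₀ with rfl | hi
    · rw [hci₀]; simp
    · rw [hf'eq i hi]
  have hsK' : s ∈ K' := by
    rw [← hf'i₀]; exact subset_convexHull ℝ _ (Set.mem_range_self i₀)
  have hsne : s ≠ y := by
    intro h; rw [h] at hsy; linarith
  set q : ℝ := ‖s - y‖^2 with hq
  have hqpos : 0 < q := pow_pos (norm_pos_iff.2 (sub_ne_zero.2 hsne)) 2
  set τ : ℝ := min 1 (⟪y, y⟫ / q) with hτ
  have hτpos : 0 < τ := lt_min one_pos (div_pos hyy hqpos)
  have hτ1 : τ ≤ 1 := min_le_left _ _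
  have hτq : τ * q ≤ ⟪y, y⟫ := by
    rw [← le_div_iff₀ hqpos]; exact min_le_right _ _
  set z : E := y + τ • (s - y) with hz
  have hzK' : z ∈ K' := by
    have hcomb := (convex_convexHull ℝ (Set.range f')) hyK' hsK'
      (by linarith : (0:ℝ) ≤ 1 - τ) hτpos.le (by ring)
    rw [← hK'] at hcomb
    convert hcomb using 1
    rw [hz]; module
  have hnorm : ‖z‖^2 < ‖y‖^2 := by
    have hexp : ‖z‖^2 = ‖y‖^2 + 2 * (τ * ⟪y, s - y⟫) + τ^2 * q := by
      rw [hz, norm_add_sq_real, real_inner_smul_right, norm_smul, mul_pow,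
        Real.norm_eq_abs, sq_abs, ← hq]
    have hip : ⟪y, s - y⟫ ≤ -⟪y, y⟫ := by
      rw [inner_sub_right]; linarith
    have hyn : ⟪y, y⟫ = ‖y‖^2 := real_inner_self_eq_norm_sq y
    nlinarith [hτpos, hyy]
  have hlt : ‖z‖ < ‖y‖ := lt_of_pow_lt_pow_left₀ 2 (norm_nonneg y) hnorm
  have hdg' : d g' ≤ ‖z‖ := by
    have h := Metric.infDist_le_dist_of_mem (x := (0:E)) hzK'
    simpa [dist_eq_norm] using h
  have hdg : d g = ‖y‖ := by
    rw [show d g = infDist 0 K from rfl, hyd, dist_eq_norm, zero_sub, norm_neg]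
  have hfin := hgmin g' (mem_univ g')
  rw [hdg] at hfin
  linarith

lemma sum_ite_coe_eq {r : ℕ} (c : ℕ) (hc : c < r) (a : Fin r → ℝ) :
    ∑ j : Fin r, a j * (if (j : ℕ) = c then 1 else 0) = a ⟨c, hc⟩ := by
  rw [Finset.sum_eq_single (⟨c, hc⟩ : Fin r)]
  · simp
  · intro j _ hj
    rw [if_neg (show ¬(j : ℕ) = c from fun h => hj (Fin.ext h)), mul_zero]
  · simp

lemma euclidean_sum_apply {ι κ : Type*} [Fintype ι] (s : Finset κ)
    (g : κ → EuclideanSpace ℝ ι) (x : ι) :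
    (∑ k ∈ s, g k) x = ∑ k ∈ s, g k x := by
  classical
  induction s using Finset.cons_induction with
  | empty => rfl
  | cons i s hi ih => rw [Finset.sum_cons, Finset.sum_cons, PiLp.add_apply, ih]

/-- Lindström's theorem: if N = (r-1)n + 1 and A_1, ..., A_N are nonempty subsets of an
n-element set, then there are nonempty pairwise disjoint index sets J_1, ..., J_r with
⋃_{i ∈ J_1} A_i = ⋯ = ⋃_{i ∈ J_r} A_i. -/
theorem lindstrom (n r : ℕ) (hn : 1 < n) (hr : 1 < r)
    (A : Fin ((r - 1) * n + 1) → Finset (Fin n)) (hA : ∀ i, (A i).Nonempty) :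
    ∃ J : Fin r → Finset (Fin ((r - 1) * n + 1)),
      (∀ j, (J j).Nonempty) ∧
      (∀ j k, j ≠ k → Disjoint (J j) (J k)) ∧
      (∀ j k, (J j).biUnion A = (J k).biUnion A) := by
  classical
  have hlast : r - 1 < r := by omega
  -- normalized characteristic vectors
  have hcard : ∀ i, (0:ℝ) < (A i).card := fun i => by
    exact_mod_cast Finset.card_pos.2 (hA i)
  set χ : Fin ((r - 1) * n + 1) → Fin n → ℝ := fun i p => if p ∈ A i then ((A i).card : ℝ)⁻¹ else 0 with hχ
  have hχ0 : ∀ i p, 0 ≤ χ i p := by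
    intro i p; rw [hχ]; dsimp only; split
    · exact le_of_lt (inv_pos.2 (hcard i))
    · exact le_refl 0
  have hχsum : ∀ i, ∑ p, χ i p = 1 := by
    intro i
    rw [hχ]; dsimp only
    rw [Finset.sum_ite_mem, Finset.univ_inter, Finset.sum_const, nsmul_eq_mul]
    exact mul_inv_cancel₀ (ne_of_gt (hcard i))
  have hχpos : ∀ i p, p ∈ A i ↔ 0 < χ i p := by
    intro i p; rw [hχ]; dsimp only; constructor
    · intro h; rw [if_pos h]; exact inv_pos.2 (hcard i)
    · intro h; by_contra hm; rw [if_neg hm] at h; exact lt_irrefl 0 h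
  -- the vectors u j
  set u : Fin r → Fin (r - 1) → ℝ := fun j q =>
      (if (j : ℕ) = (q : ℕ) then 1 else 0) - (if (j : ℕ) = r - 1 then 1 else 0) with hu
  have hqlt : ∀ q : Fin (r - 1), (q : ℕ) < r := fun q => lt_trans q.isLt hlast
  have hkey_sum : ∀ (a : Fin r → ℝ) (q : Fin (r - 1)),
      ∑ j : Fin r, a j * u j q = a ⟨(q : ℕ), hqlt q⟩ - a ⟨r - 1, hlast⟩ := by
    intro a q
    rw [hu]; dsimp only
    simp only [mul_sub]
    rw [Finset.sum_sub_distrib, sum_ite_coe_eq _ (hqlt q) a, sum_ite_coe_eq _ hlast a]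
  have husum : ∀ q : Fin (r - 1), ∑ j : Fin r, u j q = 0 := by
    intro q
    have h := hkey_sum (fun _ => 1) q
    simpa using h
  have hurel : ∀ a : Fin r → ℝ, (∀ q : Fin (r - 1), ∑ j : Fin r, a j * u j q = 0) →
      ∀ j k, a j = a k := by
    intro a ha
    have hall : ∀ j : Fin r, a j = a ⟨r - 1, hlast⟩ := by
      intro j
      rcases Nat.lt_or_ge (j : ℕ) (r - 1) with hj | hj
      · have hq := ha ⟨(j : ℕ), hj⟩
        rw [hkey_sum a ⟨(j : ℕ), hj⟩] at hq
        have hjj : (⟨(j : ℕ), hqlt ⟨(j : ℕ), hj⟩⟩ : Fin r) = j := Fin.ext rfl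
        rw [hjj] at hq
        linarith
      · have hjv : (j : ℕ) = r - 1 := by have := j.isLt; omega
        have hje : j = ⟨r - 1, hlast⟩ := Fin.ext hjv
        rw [hje]
    intro j k; rw [hall j, hall k]
  -- the tensor vectors
  set vec : Fin ((r - 1) * n + 1) → Fin r → EuclideanSpace ℝ (Fin n × Fin (r - 1)) :=
    fun i j => WithLp.toLp 2 (fun pq : Fin n × Fin (r - 1) => χ i pq.1 * u j pq.2) with hvec
  have hvecapp : ∀ i j p q, vec i j (p, q) = χ i p * u j q := fun i j p q => rfl
  have hvecsum : ∀ i, ∑ j : Fin r, vec i j = 0 := by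
    intro i
    ext pq
    rw [euclidean_sum_apply]
    have : ∀ j : Fin r, vec i j pq = χ i pq.1 * u j pq.2 := fun j => rfl
    simp only [this]
    rw [← Finset.mul_sum, husum, mul_zero]
    rfl
  set C : Fin ((r - 1) * n + 1) → Finset (EuclideanSpace ℝ (Fin n × Fin (r - 1))) :=
    fun i => (Finset.univ : Finset (Fin r)).image (vec i) with hC
  have hC0 : ∀ i, (0 : EuclideanSpace ℝ (Fin n × Fin (r - 1))) ∈ convexHull ℝ (C i : Set _) := by
    intro i
    have hmem := Finset.centerMass_mem_convexHull (Finset.univ : Finset (Fin r))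
      (w := fun _ => (1:ℝ)) (fun _ _ => zero_le_one)
      (by simp; positivity)
      (fun j _ => (Finset.mem_coe.2 (Finset.mem_image_of_mem (vec i) (mem_univ j)) :
        vec i j ∈ (C i : Set _)))
    rw [Finset.centerMass] at hmem
    simp only [one_smul] at hmem
    rwa [hvecsum i, smul_zero] at hmem
  have hdim : Module.finrank ℝ (EuclideanSpace ℝ (Fin n × Fin (r - 1))) < (r - 1) * n + 1 := by
    rw [finrank_euclideanSpace, Fintype.card_prod, Fintype.card_fin, Fintype.card_fin,
      Nat.mul_comm]
    omega
  obtain ⟨f, hfmem, hf0⟩ := colorful_caratheodory hdim C hC0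
  have hfim : ∀ i, ∃ j, vec i j = f i := by
    intro i
    have := hfmem i
    rw [hC, Finset.mem_image] at this
    obtain ⟨j, -, hj⟩ := this
    exact ⟨j, hj⟩
  choose σ hσ using hfim
  obtain ⟨c, hc0, hc1, hcs⟩ := (mem_convexHull_range_iff' f 0).1 hf0
  -- the group sums
  set w : Fin r → Fin n → ℝ :=
    fun j p => ∑ i ∈ Finset.univ.filter (fun i => σ i = j), c i * χ i p with hw
  have heval : ∀ p q, ∑ j : Fin r, w j p * u j q = 0 := by
    intro p q
    have h1 : (∑ i, c i • f i) (p, q) = 0 := by rw [hcs]; rfl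
    rw [euclidean_sum_apply] at h1
    have h2 : ∑ i, c i * (χ i p * u (σ i) q) = 0 := by
      rw [← h1]
      apply Finset.sum_congr rfl
      intro i _
      rw [← hσ i]
      rfl
    have h3 : ∑ j : Fin r, ∑ i ∈ Finset.univ.filter (fun i => σ i = j),
        c i * (χ i p * u (σ i) q) = 0 := by
      rw [Finset.sum_fiberwise]; exact h2
    rw [← h3]
    apply Finset.sum_congr rfl
    intro j _
    rw [hw]; dsimp only
    rw [Finset.sum_mul]
    apply Finset.sum_congr rfl
    intro i hi
    rw [Finset.mem_filter] at hi
    rw [hi.2]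
    ring
  have hweq : ∀ j k, w j = w k := by
    intro j k
    funext p
    exact hurel (fun j => w j p) (fun q => heval p q) j k
  have hressum : ∀ j, ∑ p, w j p = ∑ i ∈ Finset.univ.filter (fun i => σ i = j), c i := by
    intro j
    rw [hw]; dsimp only
    rw [Finset.sum_comm]
    apply Finset.sum_congr rfl
    intro i _
    rw [← Finset.mul_sum, hχsum, mul_one]
  have hStotal : ∑ j : Fin r, ∑ i ∈ Finset.univ.filter (fun i => σ i = j), c i = 1 := by
    rw [Finset.sum_fiberwise]; exact hc1
  have hSpos : ∀ j, 0 < ∑ i ∈ Finset.univ.filter (fun i => σ i = j), c i := by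
    intro j
    by_contra h
    push_neg at h
    have hallle : ∀ k : Fin r, ∑ i ∈ Finset.univ.filter (fun i => σ i = k), c i ≤ 0 := by
      intro k
      calc ∑ i ∈ Finset.univ.filter (fun i => σ i = k), c i
          = ∑ p, w k p := (hressum k).symm
        _ = ∑ p, w j p := by rw [hweq k j]
        _ = ∑ i ∈ Finset.univ.filter (fun i => σ i = j), c i := hressum j
        _ ≤ 0 := h
    have hle : (1:ℝ) ≤ 0 := by
      rw [← hStotal]
      exact Finset.sum_nonpos fun k _ => hallle k
    linarith
  -- the index sets
  set J : Fin r → Finset (Fin ((r - 1) * n + 1)) :=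
    fun j => Finset.univ.filter (fun i => σ i = j ∧ 0 < c i) with hJ
  have hJne : ∀ j, (J j).Nonempty := by
    intro j
    by_contra h
    rw [Finset.not_nonempty_iff_eq_empty] at h
    have hzero : ∑ i ∈ Finset.univ.filter (fun i => σ i = j), c i = 0 := by
      apply Finset.sum_eq_zero
      intro i hi
      rw [Finset.mem_filter] at hi
      rcases ((hc0 i).eq_or_lt.imp Eq.symm id) with h0 | h0
      · exact h0
      · exfalso
        have hiJ : i ∈ J j := by
          rw [hJ]; dsimp only
          rw [Finset.mem_filter]
          exact ⟨mem_univ i, hi.2, h0⟩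
        rw [h] at hiJ
        exact absurd hiJ (Finset.notMem_empty i)
    have := hSpos j
    rw [hzero] at this
    exact lt_irrefl 0 this
  have hJdisj : ∀ j k, j ≠ k → Disjoint (J j) (J k) := by
    intro j k hjk
    rw [Finset.disjoint_left]
    intro i hij hik
    rw [hJ] at hij hik; dsimp only at hij hik
    rw [Finset.mem_filter] at hij hik
    exact hjk (hij.2.1 ▸ hik.2.1 ▸ rfl)
  have hbi : ∀ j p, p ∈ (J j).biUnion A ↔ 0 < w j p := by
    intro j p
    rw [Finset.mem_biUnion]
    constructor
    · rintro ⟨i, hi, hpA⟩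
      rw [hJ] at hi; dsimp only at hi
      rw [Finset.mem_filter] at hi
      obtain ⟨-, hσi, hci⟩ := hi
      have hterm : 0 < c i * χ i p := mul_pos hci ((hχpos i p).1 hpA)
      have hle : c i * χ i p ≤ w j p := by
        rw [hw]; dsimp only
        exact Finset.single_le_sum (f := fun i => c i * χ i p)
          (fun k _ => mul_nonneg (hc0 k) (hχ0 k p))
          (by rw [Finset.mem_filter]; exact ⟨mem_univ i, hσi⟩)
      linarith
    · intro hpos
      by_contra h
      push_neg at h
      have hzero : w j p = 0 := by
        rw [hw]; dsimp only
        apply Finset.sum_eq_zero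
        intro i hi
        rw [Finset.mem_filter] at hi
        rcases ((hc0 i).eq_or_lt.imp Eq.symm id) with h0 | h0
        · rw [h0, zero_mul]
        · have hpA : p ∉ A i := by
            apply h i
            rw [hJ]; dsimp only
            rw [Finset.mem_filter]
            exact ⟨mem_univ i, hi.2, h0⟩
          rw [hχ]; dsimp only
          rw [if_neg hpA, mul_zero]
      rw [hzero] at hpos
      exact lt_irrefl 0 hpos
  refine ⟨J, hJne, hJdisj, ?_⟩
  intro j k
  ext p
  rw [hbi j p, hbi k p, hweq j k]
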